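/- Let {D_i}_{i∈ℕ} be pairwise disjoint, M-Ahlfors 2-regular Jordan regions and E a compact set. There is a constant K > 0 depending only on M such that for every c > 0, the number of indices i with D_i ∩ E ≠ ∅ and diam(D_i) ≥ c·diam(E) is at most K(c⁻² + 1). -/

import Mathlib

def IsJordanCurve (C : Set ℂ) : Prop :=
  ∃ γ : ℝ → ℂ, Function.Periodic γ 1 ∧ Continuous γ ∧
    Set.InjOn γ (Set.Ico 0 1) ∧ Set.range γ = C

def IsJordanRegion (D : Set ℂ) : Prop :=
  IsOpen D ∧ IsConnected D ∧ Bornology.IsBounded D ∧ IsJordanCurve (frontier D)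

def AhlforsTwoRegular (M : ℝ) (D : Set ℂ) : Prop :=
  ∀ p ∈ closure D, ∀ r : ℝ, 0 < r → r ≤ Metric.diam D →
    M * r ^ 2 ≤ (MeasureTheory.volume (Metric.ball p r ∩ D)).toReal

open MeasureTheory Set

theorem stmt7 (M : ℝ) (hM : 0 < M) :
    ∃ K > 0, ∀ (D : ℕ → Set ℂ),
      (∀ i, IsJordanRegion (D i)) → (∀ i, AhlforsTwoRegular M (D i)) →
      Pairwise (Function.onFun Disjoint D) →
      ∀ (E : Set ℂ), IsCompact E → ∀ c : ℝ, 0 < c →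
        {i : ℕ | (D i ∩ E).Nonempty ∧ c * Metric.diam E ≤ Metric.diam (D i)}.Finite ∧
        (({i : ℕ | (D i ∩ E).Nonempty ∧ c * Metric.diam E ≤ Metric.diam (D i)}.ncard : ℝ)
          ≤ K * (c⁻¹ ^ 2 + 1)) := by
  classical
  have hpi := Real.pi_pos
  refine ⟨2 * Real.pi / M + 1, by positivity, ?_⟩
  intro D hJ hA hdisj E hE c hc
  set N := {i : ℕ | (D i ∩ E).Nonempty ∧ c * Metric.diam E ≤ Metric.diam (D i)} with hNdef
  have hK1 : (1 : ℝ) ≤ 2 * Real.pi / M + 1 := by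
    have : 0 ≤ 2 * Real.pi / M := by positivity
    linarith
  have hfac : (1 : ℝ) ≤ c⁻¹ ^ 2 + 1 := by nlinarith [sq_nonneg c⁻¹]
  rcases eq_or_lt_of_le (Metric.diam_nonneg (s := E)) with hd | hd
  · -- diam E = 0 : E is a subsingleton, at most one region meets E
    have hsub : N.Subsingleton := by
      intro i hi j hj
      obtain ⟨x, hxD, hxE⟩ := hi.1
      obtain ⟨y, hyD, hyE⟩ := hj.1
      have hxy : x = y := by
        have h1 := Metric.dist_le_diam_of_mem hE.isBounded hxE hyE
        rw [← hd] at h1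
        exact dist_le_zero.mp h1
      by_contra hij
      exact (hdisj hij).le_bot ⟨hxD, hxy ▸ hyD⟩
    have hfin : N.Finite := hsub.finite
    refine ⟨hfin, ?_⟩
    have hcard : N.ncard ≤ 1 := by
      rcases hsub.eq_empty_or_singleton with h | ⟨a, h⟩ <;> simp [h]
    calc (N.ncard : ℝ) ≤ 1 := by exact_mod_cast hcard
      _ ≤ (2 * Real.pi / M + 1) * (c⁻¹ ^ 2 + 1) := by nlinarith
  · -- diam E > 0
    set d := Metric.diam E with hddef
    set r := c * d with hrdef
    have hr : 0 < r := mul_pos hc hd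
    -- choose a point in D i ∩ E for each relevant i
    set p : ℕ → ℂ := fun i => if h : (D i ∩ E).Nonempty then h.some else 0 with hpdef
    have hpmem : ∀ i ∈ N, p i ∈ D i ∩ E := by
      intro i hi
      simp only [hpdef, dif_pos hi.1]
      exact hi.1.some_mem
    set A : ℕ → Set ℂ := fun i => Metric.ball (p i) r ∩ D i with hAdef
    have hAvol : ∀ i ∈ N, M * r ^ 2 ≤ (volume (A i)).toReal := by
      intro i hi
      exact hA i (p i) (subset_closure (hpmem i hi).1) r hr hi.2
    have hAne : ∀ i, volume (A i) ≠ ⊤ := by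
      intro i
      exact ((measure_mono Set.inter_subset_left).trans_lt measure_ball_lt_top).ne
    -- key counting estimate
    have key : ∀ S : Finset ℕ, ↑S ⊆ N → (S.card : ℝ) * (M * r ^ 2) ≤ Real.pi * (d + r) ^ 2 := by
      intro S hS
      rcases S.eq_empty_or_nonempty with rfl | ⟨i₀, hi₀⟩
      · simp; positivity
      · have hi₀N : i₀ ∈ N := hS hi₀
        set x₀ := p i₀ with hx₀
        have hx₀E : x₀ ∈ E := (hpmem i₀ hi₀N).2
        have hsubset : ∀ i ∈ S, A i ⊆ Metric.ball x₀ (d + r) := by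
          intro i hi y hy
          have hpiE : p i ∈ E := (hpmem i (hS hi)).2
          have h1 : dist y (p i) < r := hy.1
          have h2 : dist (p i) x₀ ≤ d := Metric.dist_le_diam_of_mem hE.isBounded hpiE hx₀E
          have := dist_triangle y (p i) x₀
          simp only [Metric.mem_ball]
          linarith
        have hmeas : ∀ i ∈ S, MeasurableSet (A i) := fun i _ =>
          measurableSet_ball.inter (hJ i).1.measurableSet
        have hpd : (↑S : Set ℕ).PairwiseDisjoint A := by
          intro i _ j _ hij
          exact (hdisj hij).mono Set.inter_subset_right Set.inter_subset_right
        calc (S.card : ℝ) * (M * r ^ 2) = ∑ _i ∈ S, M * r ^ 2 := by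
              rw [Finset.sum_const, nsmul_eq_mul]
          _ ≤ ∑ i ∈ S, (volume (A i)).toReal :=
              Finset.sum_le_sum fun i hi => hAvol i (hS hi)
          _ = (∑ i ∈ S, volume (A i)).toReal :=
              (ENNReal.toReal_sum fun i _ => hAne i).symm
          _ = (volume (⋃ i ∈ S, A i)).toReal := by
              rw [measure_biUnion_finset hpd hmeas]
          _ ≤ (volume (Metric.ball x₀ (d + r))).toReal := by
              refine ENNReal.toReal_mono measure_ball_lt_top.ne (measure_mono ?_)
              exact Set.iUnion₂_subset hsubset
          _ = Real.pi * (d + r) ^ 2 := by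
              rw [Complex.volume_ball, ENNReal.toReal_mul, ENNReal.toReal_pow,
                ENNReal.toReal_ofReal (by positivity), ENNReal.coe_toReal,
                NNReal.coe_real_pi]
              ring
    -- finiteness
    have hMr : 0 < M * r ^ 2 := by positivity
    have hfin : N.Finite := by
      by_contra hinf
      have hinf' : N.Infinite := hinf
      obtain ⟨t, htN, htfin, htcard⟩ :=
        hinf'.exists_subset_ncard_eq (⌈Real.pi * (d + r) ^ 2 / (M * r ^ 2)⌉₊ + 1)
      have hcoe : ↑htfin.toFinset ⊆ N := by rwa [htfin.coe_toFinset]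
      have hk := key htfin.toFinset hcoe
      rw [← Set.ncard_eq_toFinset_card t htfin, htcard] at hk
      have hle : ((⌈Real.pi * (d + r) ^ 2 / (M * r ^ 2)⌉₊ + 1 : ℕ) : ℝ)
          ≤ Real.pi * (d + r) ^ 2 / (M * r ^ 2) := by
        rw [le_div_iff₀ hMr]; exact hk
      have hceil := Nat.le_ceil (Real.pi * (d + r) ^ 2 / (M * r ^ 2))
      push_cast at hle
      linarith
    refine ⟨hfin, ?_⟩
    -- cardinality bound
    have hcoe : ↑hfin.toFinset ⊆ N := by rw [hfin.coe_toFinset]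
    have hk := key hfin.toFinset hcoe
    rw [← Set.ncard_eq_toFinset_card N hfin] at hk
    have hRHS : Real.pi * (d + r) ^ 2
        ≤ (2 * Real.pi / M + 1) * (c⁻¹ ^ 2 + 1) * (M * r ^ 2) := by
      have heq : (2 * Real.pi / M + 1) * (c⁻¹ ^ 2 + 1) * (M * r ^ 2)
          = (2 * Real.pi + M) * (d ^ 2 + c ^ 2 * d ^ 2) := by
        rw [hrdef]
        field_simp
      rw [heq, hrdef]
      nlinarith [mul_nonneg hpi.le (sq_nonneg (d - c * d)), sq_nonneg d, sq_nonneg (c * d),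
        mul_pos (mul_pos hM (by positivity : (0:ℝ) < d ^ 2)) hd]
    have := hk.trans hRHS
    exact le_of_mul_le_mul_right this hMr
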